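/- Let β, γ ∈ ℤ^{m|n} both be antidominant, and assume their content-difference functions agree: β_0(y) − β_1(y) = γ_0(y) − γ_1(y) for all y ∈ ℤ. If moreover φ_x(γ) ≥ φ_x(β) and ε_x(γ) ≥ ε_x(β) for all x ∈ ℤ, then γ = β. (This is the combinatorial core of Lemma 4.4: two antidominant weights with the same central character whose primitive ideals are comparable must be equal.) -/

import Mathlib

/-- A symbol of an `i`-signature: `+`, `-`, or `0`. -/
inductive Sign : Type
  | plus : Sign
  | minus : Sign
  | zero : Sign
  deriving DecidableEq, Repr

/-- If the list starts with `0* +`, replace that `+` by `0` (else `none`). -/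
def eatPlus : List Sign → Option (List Sign)
  | [] => none
  | Sign.plus :: rest => some (Sign.zero :: rest)
  | Sign.zero :: rest => (eatPlus rest).map (Sign.zero :: ·)
  | Sign.minus :: _ => none

/-- Cancel the leftmost pattern `- 0* +` (replacing both symbols by `0`), if any. -/
def cancelOne : List Sign → Option (List Sign)
  | [] => none
  | Sign.minus :: rest =>
    match eatPlus rest with
    | some rest' => some (Sign.zero :: rest')
    | none => (cancelOne rest).map (Sign.minus :: ·)
  | s :: rest => (cancelOne rest).map (s :: ·)

/-- Iterate cancellation at most `k` times. -/
def reduceIter : ℕ → List Sign → List Sign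
  | 0, l => l
  | k + 1, l =>
    match cancelOne l with
    | none => l
    | some l' => reduceIter k l'

/-- The reduced signature: cancel `- 0* +` patterns until none remains
(`l.length` iterations always suffice). -/
def reduceSig (l : List Sign) : List Sign := reduceIter l.length l

/-- The `i`-signature symbol of `α ∈ ℤ^{m|n}` at position `j` (0-indexed;
positions `j < m` are left of the separator). -/
def signOf (m n : ℕ) (i : ℤ) (α : Fin (m + n) → ℤ) (j : Fin (m + n)) : Sign :=
  if (j : ℕ) < m then
    if α j = i then Sign.plus else if α j = i + 1 then Sign.minus else Sign.zero
  else
    if α j = i + 1 then Sign.plus else if α j = i then Sign.minus else Sign.zero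

/-- The `i`-signature of `α` as a list of length `m + n`. -/
def sigList (m n : ℕ) (i : ℤ) (α : Fin (m + n) → ℤ) : List Sign :=
  List.ofFn (signOf m n i α)

/-- The reduced `i`-signature of `α`. -/
def redSig (m n : ℕ) (i : ℤ) (α : Fin (m + n) → ℤ) : List Sign :=
  reduceSig (sigList m n i α)

/-- `ε_i(α)`: the number of `-` in the reduced `i`-signature. -/
def epsilonNum (m n : ℕ) (i : ℤ) (α : Fin (m + n) → ℤ) : ℕ :=
  (redSig m n i α).count Sign.minus

/-- `φ_i(α)`: the number of `+` in the reduced `i`-signature. -/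
def phiNum (m n : ℕ) (i : ℤ) (α : Fin (m + n) → ℤ) : ℕ :=
  (redSig m n i α).count Sign.plus

/-- `c_j ∈ ℤ^{m|n}`: `+1` at position `j` if `j` is left of the separator,
`-1` at position `j` otherwise, and `0` elsewhere (0-indexed). -/
def cvec (m n : ℕ) (j : ℕ) : Fin (m + n) → ℤ :=
  fun k => if (k : ℕ) = j then (if j < m then 1 else -1) else 0

/-- The index of the last occurrence of `s` in `l` (junk if `s ∉ l`). -/
def lastIdxOf (s : Sign) (l : List Sign) : ℕ :=
  l.length - 1 - l.reverse.idxOf s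

/-- The crystal operator `ẽ_i`: subtract `c_j` at the position `j` of the
leftmost `-` of the reduced `i`-signature; `none` if there is no `-`. -/
def etilde (m n : ℕ) (i : ℤ) (α : Fin (m + n) → ℤ) : Option (Fin (m + n) → ℤ) :=
  if Sign.minus ∈ redSig m n i α then
    some (fun k => α k - cvec m n ((redSig m n i α).idxOf Sign.minus) k)
  else none

/-- The crystal operator `f̃_i`: add `c_j` at the position `j` of the
rightmost `+` of the reduced `i`-signature; `none` if there is no `+`. -/
def ftilde (m n : ℕ) (i : ℤ) (α : Fin (m + n) → ℤ) : Option (Fin (m + n) → ℤ) :=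
  if Sign.plus ∈ redSig m n i α then
    some (fun k => α k + cvec m n (lastIdxOf Sign.plus (redSig m n i α)) k)
  else none

/-- `α_0(x)`: the number of entries equal to `x` left of the separator. -/
def count0 (m n : ℕ) (α : Fin (m + n) → ℤ) (x : ℤ) : ℕ :=
  (Finset.univ.filter fun j : Fin (m + n) => (j : ℕ) < m ∧ α j = x).card

/-- `α_1(x)`: the number of entries equal to `x` right of the separator. -/
def count1 (m n : ℕ) (α : Fin (m + n) → ℤ) (x : ℤ) : ℕ :=
  (Finset.univ.filter fun j : Fin (m + n) => m ≤ (j : ℕ) ∧ α j = x).card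

/-- `α ∈ ℤ^{m|n}` is antidominant if `a_1 ≤ … ≤ a_m` and `a_{m+1} ≥ … ≥ a_{m+n}`. -/
def Antidominant (m n : ℕ) (α : Fin (m + n) → ℤ) : Prop :=
  (∀ j k : Fin (m + n), (j : ℕ) ≤ (k : ℕ) → (k : ℕ) < m → α j ≤ α k) ∧
  (∀ j k : Fin (m + n), m ≤ (j : ℕ) → (j : ℕ) ≤ (k : ℕ) → α k ≤ α j)

open List

namespace SignAux

notation "Z" => Sign.zero
notation "P" => Sign.plus
notation "M" => Sign.minus

def shape (p a b q c d r : ℕ) : List Sign :=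
  replicate p Z ++ (replicate a P ++ (replicate b M ++ (replicate q Z ++
  (replicate c P ++ (replicate d M ++ replicate r Z)))))

lemma eatPlus_zeros (q : ℕ) (t : List Sign) :
    eatPlus (replicate q Z ++ t) = (eatPlus t).map (replicate q Z ++ ·) := by
  induction q with
  | zero => simp
  | succ q ih =>
    rw [replicate_succ, cons_append]
    show (eatPlus (replicate q Z ++ t)).map (Z :: ·) = _
    rw [ih]
    cases eatPlus t <;> simp [replicate_succ]

lemma eatPlus_plus (c : ℕ) (t : List Sign) :
    eatPlus (replicate (c+1) P ++ t) = some (Z :: (replicate c P ++ t)) := by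
  rw [replicate_succ, cons_append]; rfl

lemma eatPlus_minus (d : ℕ) (t : List Sign) (hd : 1 ≤ d ∨ eatPlus t = none) :
    eatPlus (replicate d M ++ t) = none := by
  cases d with
  | zero => simpa using hd.resolve_left (by omega)
  | succ d => rw [replicate_succ, cons_append]; rfl

lemma eatPlus_zs (q : ℕ) : eatPlus (replicate q Z) = none := by
  have := eatPlus_zeros q []
  simpa [show eatPlus [] = none from rfl] using this

lemma cancelOne_cons_ne (s : Sign) (hs : s ≠ M) (t : List Sign) :
    cancelOne (s :: t) = (cancelOne t).map (s :: ·) := by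
  cases s <;> simp at hs ⊢ <;> rfl

lemma cancelOne_block (k : ℕ) (s : Sign) (hs : s ≠ M) (t : List Sign) :
    cancelOne (replicate k s ++ t) = (cancelOne t).map (replicate k s ++ ·) := by
  induction k with
  | zero => simp
  | succ k ih =>
    rw [replicate_succ, cons_append, cancelOne_cons_ne s hs, ih]
    cases cancelOne t <;> simp [replicate_succ]

lemma cancelOne_minuses_none (b : ℕ) (t : List Sign) (h : eatPlus t = none) :
    cancelOne (replicate b M ++ t) = (cancelOne t).map (replicate b M ++ ·) := by
  induction b with
  | zero => simp
  | succ b ih =>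
    rw [replicate_succ, cons_append]
    show (match eatPlus (replicate b M ++ t) with
      | some rest' => some (Z :: rest')
      | none => (cancelOne (replicate b M ++ t)).map (M :: ·)) = _
    rw [eatPlus_minus b t (by cases b with | zero => exact Or.inr h | succ b => exact Or.inl (by omega)), ih]
    cases cancelOne t <;> simp [replicate_succ]

lemma cancelOne_minuses_some (b : ℕ) (t t' : List Sign) (h : eatPlus t = some t') :
    cancelOne (replicate (b+1) M ++ t) = some (replicate b M ++ (Z :: t')) := by
  induction b with
  | zero =>
    rw [replicate_succ]
    show (match eatPlus t with
      | some rest' => some (Z :: rest')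
      | none => (cancelOne t).map (M :: ·)) = _
    rw [h]; simp
  | succ b ih =>
    rw [replicate_succ, cons_append]
    show (match eatPlus (replicate (b+1) M ++ t) with
      | some rest' => some (Z :: rest')
      | none => (cancelOne (replicate (b+1) M ++ t)).map (M :: ·)) = _
    rw [eatPlus_minus (b+1) t (Or.inl (by omega)), ih]
    simp [replicate_succ]

end SignAux
namespace SignAux

lemma cancelOne_zs (r : ℕ) : cancelOne (replicate r Z) = none := by
  have := cancelOne_block r Z (by simp) []
  simp at this
  simpa [show cancelOne [] = none from rfl] using this

lemma cancelOne_tail_none (q d r : ℕ) :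
    cancelOne (replicate q Z ++ (replicate d M ++ replicate r Z)) = none := by
  rw [cancelOne_block q Z (by simp),
    cancelOne_minuses_none d _ (eatPlus_zs r), cancelOne_zs r]
  rfl

lemma eatPlus_tail_none (q d r : ℕ) :
    eatPlus (replicate q Z ++ (replicate d M ++ replicate r Z)) = none := by
  rw [eatPlus_zeros,
    eatPlus_minus d _ (by cases d with
      | zero => exact Or.inr (eatPlus_zs r)
      | succ d => exact Or.inl (by omega))]
  rfl

lemma cancelOne_shape_none (p a b q c d r : ℕ) (h : b = 0 ∨ c = 0) :
    cancelOne (shape p a b q c d r) = none := by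
  unfold shape
  rw [cancelOne_block p Z (by simp), cancelOne_block a P (by simp)]
  rcases h with h | h
  · subst h
    rw [replicate_zero, nil_append, cancelOne_block q Z (by simp),
      cancelOne_block c P (by simp),
      cancelOne_minuses_none d _ (eatPlus_zs r), cancelOne_zs r]
    rfl
  · subst h
    rw [cancelOne_minuses_none b _ (by
        rw [show replicate 0 P ++ (replicate d M ++ replicate r Z) =
          replicate d M ++ replicate r Z by simp]
        exact eatPlus_tail_none q d r),
      show replicate 0 P ++ (replicate d M ++ replicate r Z) =
         replicate d M ++ replicate r Z by simp,
      cancelOne_tail_none q d r]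
    rfl

lemma cancelOne_shape_some (p a b q c d r : ℕ) :
    cancelOne (shape p a (b+1) q (c+1) d r) = some (shape p a b (q+2) c d r) := by
  unfold shape
  rw [cancelOne_block p Z (by simp), cancelOne_block a P (by simp),
    cancelOne_minuses_some (b) _ _ (by
      rw [eatPlus_zeros, eatPlus_plus]; rfl)]

  have h2 : replicate (q+2) Z = Z :: (replicate q Z ++ [Z]) := by
    rw [show q+2 = (q+1)+1 by rfl, replicate_succ, replicate_succ']
  rw [h2]
  simp

end SignAux
namespace SignAux

lemma count_shape (s : Sign) (p a b q c d r : ℕ) :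
    (shape p a b q c d r).count s =
      p * (if Z = s then 1 else 0) + a * (if P = s then 1 else 0) +
      b * (if M = s then 1 else 0) + q * (if Z = s then 1 else 0) +
      c * (if P = s then 1 else 0) + d * (if M = s then 1 else 0) +
      r * (if Z = s then 1 else 0) := by
  unfold shape
  simp [List.count_append, List.count_replicate]
  split <;> split <;> split <;> omega

lemma counts_reduceIter : ∀ (k b c p a q d r : ℕ), min b c ≤ k →
    (reduceIter k (shape p a b q c d r)).count P = a + c - min b c ∧
    (reduceIter k (shape p a b q c d r)).count M = b + d - min b c := by
  intro k
  induction k with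
  | zero =>
    intro b c p a q d r h
    have hm : min b c = 0 := by omega
    simp only [reduceIter, count_shape, hm]
    constructor <;> simp <;> omega
  | succ k ih =>
    intro b c p a q d r h
    rcases Nat.eq_zero_or_pos (min b c) with hm | hm
    · have hnone : cancelOne (shape p a b q c d r) = none := by
        apply cancelOne_shape_none; omega
      simp only [reduceIter, hnone, count_shape, hm]
      constructor <;> simp <;> omega
    · obtain ⟨b', rfl⟩ : ∃ b', b = b' + 1 := ⟨b - 1, by omega⟩
      obtain ⟨c', rfl⟩ : ∃ c', c = c' + 1 := ⟨c - 1, by omega⟩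
      have hsome := cancelOne_shape_some p a b' q c' d r
      simp only [reduceIter, hsome]
      have := ih b' c' p a (q+2) d r (by omega)
      constructor
      · rw [this.1]; omega
      · rw [this.2]; omega

lemma counts_reduceSig (p a b q c d r : ℕ) :
    (reduceSig (shape p a b q c d r)).count P = a + c - min b c ∧
    (reduceSig (shape p a b q c d r)).count M = b + d - min b c := by
  apply counts_reduceIter
  have : b ≤ (shape p a b q c d r).length := by
    unfold shape; simp; omega
  omega

end SignAux
namespace SignAux

lemma count_ofFn {α : Type*} [DecidableEq α] :
    ∀ (N : ℕ) (f : Fin N → α) (e : α),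
      (List.ofFn f).count e = (Finset.univ.filter (fun j => f j = e)).card := by
  intro N
  induction N with
  | zero => intro f e; simp
  | succ N ih =>
    intro f e
    rw [List.ofFn_succ, List.count_cons, ih (fun j => f j.succ) e]
    rw [Finset.card_filter, Finset.card_filter, Fin.sum_univ_succ]
    simp [add_comm]

lemma pairwise_rep (a : Fin 4) (n : ℕ) : List.Pairwise (· ≤ ·) (replicate n a) := by
  induction n with
  | zero => simp
  | succ n ih =>
    rw [replicate_succ]
    exact List.Pairwise.cons (fun y hy => by rw [List.eq_of_mem_replicate hy]) ih

lemma sorted_concat_replicates (c0 c1 c2 c3 : ℕ) :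
    List.Pairwise (· ≤ ·) (replicate c0 (0 : Fin 4) ++ (replicate c1 1 ++
      (replicate c2 2 ++ replicate c3 3))) := by
  rw [List.pairwise_append, List.pairwise_append, List.pairwise_append]
  refine ⟨pairwise_rep _ _, ⟨pairwise_rep _ _,
    ⟨pairwise_rep _ _, pairwise_rep _ _, ?_⟩, ?_⟩, ?_⟩
  all_goals
    intro x hx y hy
    rw [List.eq_of_mem_replicate hx]
    try simp only [List.mem_append] at hy
    first
    | (rcases hy with hy | hy | hy <;> rw [List.eq_of_mem_replicate hy] <;> decide)
    | (rcases hy with hy | hy <;> rw [List.eq_of_mem_replicate hy] <;> decide)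
    | (rw [List.eq_of_mem_replicate hy] ; decide)

lemma ofFn_monotone_fin4 (N : ℕ) (h : Fin N → Fin 4) (mono : Monotone h) :
    List.ofFn h = replicate ((Finset.univ.filter (fun j => h j = 0)).card) (0 : Fin 4) ++
      (replicate ((Finset.univ.filter (fun j => h j = 1)).card) 1 ++
      (replicate ((Finset.univ.filter (fun j => h j = 2)).card) 2 ++
      replicate ((Finset.univ.filter (fun j => h j = 3)).card) 3)) := by
  refine (fun hp h1 h2 => List.Perm.eq_of_pairwise' (r := (· ≤ ·)) h1 h2 hp) ?_ ?_ ?_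
  · rw [List.perm_iff_count]
    intro e
    rw [count_ofFn]
    simp only [List.count_append, List.count_replicate]
    fin_cases e <;> simp
  · exact List.pairwise_ofFn.mpr (fun _ _ h => mono h.le)
  · exact sorted_concat_replicates _ _ _ _

end SignAux
namespace SignAux

def catL (i : ℤ) (x : ℤ) : Fin 4 :=
  if x < i then 0 else if x = i then 1 else if x = i + 1 then 2 else 3

def catR (i : ℤ) (x : ℤ) : Fin 4 :=
  if i + 1 < x then 0 else if x = i + 1 then 1 else if x = i then 2 else 3

def sigma4 : Fin 4 → Sign := fun t => if t = 1 then P else if t = 2 then M else Z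

lemma catL_mono (i : ℤ) {x y : ℤ} (h : x ≤ y) : catL i x ≤ catL i y := by
  unfold catL
  split_ifs <;> first | decide | omega | (exfalso; omega)

lemma catR_anti (i : ℤ) {x y : ℤ} (h : x ≤ y) : catR i y ≤ catR i x := by
  unfold catR
  split_ifs <;> first | decide | omega | (exfalso; omega)

lemma sigma4_catL (i x : ℤ) :
    sigma4 (catL i x) = if x = i then P else if x = i + 1 then M else Z := by
  unfold catL sigma4
  split_ifs <;> first | rfl | omega | (exfalso; omega)

lemma sigma4_catR (i x : ℤ) :
    sigma4 (catR i x) = if x = i + 1 then P else if x = i then M else Z := by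
  unfold catR sigma4
  split_ifs <;> first | rfl | omega | (exfalso; omega)

lemma catL_eq_one (i x : ℤ) : catL i x = 1 ↔ x = i := by
  unfold catL; split_ifs <;> simp <;> omega

lemma catL_eq_two (i x : ℤ) : catL i x = 2 ↔ x = i + 1 := by
  unfold catL; split_ifs <;> simp <;> omega

lemma catR_eq_one (i x : ℤ) : catR i x = 1 ↔ x = i + 1 := by
  unfold catR; split_ifs <;> simp <;> omega

lemma catR_eq_two (i x : ℤ) : catR i x = 2 ↔ x = i := by
  unfold catR; split_ifs <;> simp <;> omega

lemma count0_eq (m n : ℕ) (α : Fin (m + n) → ℤ) (x : ℤ) :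
    count0 m n α x =
      (Finset.univ.filter fun j : Fin m => α (Fin.castAdd n j) = x).card := by
  unfold count0
  rw [Finset.card_filter, Finset.card_filter, Fin.sum_univ_add]
  have h1 : ∀ j : Fin n, (if ((Fin.natAdd m j : Fin (m+n)) : ℕ) < m ∧
      α (Fin.natAdd m j) = x then (1:ℕ) else 0) = 0 := by
    intro j; simp [Fin.natAdd]
  have h2 : ∀ j : Fin m, (if ((Fin.castAdd n j : Fin (m+n)) : ℕ) < m ∧
      α (Fin.castAdd n j) = x then (1:ℕ) else 0) =
      (if α (Fin.castAdd n j) = x then 1 else 0) := by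
    intro j; simp [Fin.castAdd, j.isLt]
  rw [Finset.sum_congr rfl (fun j _ => h2 j), Finset.sum_congr rfl (fun j _ => h1 j)]
  simp

lemma count1_eq (m n : ℕ) (α : Fin (m + n) → ℤ) (x : ℤ) :
    count1 m n α x =
      (Finset.univ.filter fun j : Fin n => α (Fin.natAdd m j) = x).card := by
  unfold count1
  rw [Finset.card_filter, Finset.card_filter, Fin.sum_univ_add]
  have h1 : ∀ j : Fin m, (if m ≤ ((Fin.castAdd n j : Fin (m+n)) : ℕ) ∧
      α (Fin.castAdd n j) = x then (1:ℕ) else 0) = 0 := by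
    intro j
    have hne : ¬(m ≤ ((Fin.castAdd n j : Fin (m+n)) : ℕ) ∧ α (Fin.castAdd n j) = x) := by
      rintro ⟨h, -⟩
      rw [Fin.coe_castAdd] at h
      exact absurd j.isLt (by omega)
    rw [if_neg hne]
  have h2 : ∀ j : Fin n, (if m ≤ ((Fin.natAdd m j : Fin (m+n)) : ℕ) ∧
      α (Fin.natAdd m j) = x then (1:ℕ) else 0) =
      (if α (Fin.natAdd m j) = x then 1 else 0) := by
    intro j; simp [Fin.natAdd]
  rw [Finset.sum_congr rfl (fun j _ => h2 j), Finset.sum_congr rfl (fun j _ => h1 j)]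
  simp

lemma sigList_eq_shape (m n : ℕ) (i : ℤ) (α : Fin (m + n) → ℤ)
    (hα : Antidominant m n α) :
    ∃ p q r, sigList m n i α =
      shape p (count0 m n α i) (count0 m n α (i+1)) q
        (count1 m n α (i+1)) (count1 m n α i) r := by
  have hL : Monotone (fun j : Fin m => catL i (α (Fin.castAdd n j))) := by
    intro j k hjk
    have hk : ((Fin.castAdd n k : Fin (m+n)) : ℕ) < m := k.isLt
    exact catL_mono i (hα.1 _ _ (by simpa using hjk) hk)
  have hR : Monotone (fun j : Fin n => catR i (α (Fin.natAdd m j))) := by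
    intro j k hjk
    refine catR_anti i (hα.2 (Fin.natAdd m j) (Fin.natAdd m k) (by simp) (by simpa using hjk))
  have e1 := ofFn_monotone_fin4 m _ hL
  have e2 := ofFn_monotone_fin4 n _ hR
  have hfL : (fun j : Fin m => signOf m n i α (Fin.castAdd n j)) =
      fun j => sigma4 (catL i (α (Fin.castAdd n j))) := by
    funext j
    rw [sigma4_catL]
    unfold signOf
    have hj : ((Fin.castAdd n j : Fin (m+n)) : ℕ) < m := j.isLt
    rw [if_pos hj]
  have hfR : (fun j : Fin n => signOf m n i α (Fin.natAdd m j)) =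
      fun j => sigma4 (catR i (α (Fin.natAdd m j))) := by
    funext j
    rw [sigma4_catR]
    unfold signOf
    have hj : ¬ ((Fin.natAdd m j : Fin (m+n)) : ℕ) < m := by simp
    rw [if_neg hj]
  refine ⟨(Finset.univ.filter fun j : Fin m => catL i (α (Fin.castAdd n j)) = 0).card,
    (Finset.univ.filter fun j : Fin m => catL i (α (Fin.castAdd n j)) = 3).card +
    (Finset.univ.filter fun j : Fin n => catR i (α (Fin.natAdd m j)) = 0).card,
    (Finset.univ.filter fun j : Fin n => catR i (α (Fin.natAdd m j)) = 3).card, ?_⟩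
  unfold sigList
  rw [List.ofFn_add]
  change List.ofFn (fun j : Fin m => signOf m n i α (Fin.castAdd n j)) ++
    List.ofFn (fun j : Fin n => signOf m n i α (Fin.natAdd m j)) = _
  rw [hfL, hfR]
  have mapL : (List.ofFn fun j : Fin m => sigma4 (catL i (α (Fin.castAdd n j)))) =
      List.map sigma4 (List.ofFn fun j : Fin m => catL i (α (Fin.castAdd n j))) := by
    rw [List.map_ofFn]; rfl
  have mapR : (List.ofFn fun j : Fin n => sigma4 (catR i (α (Fin.natAdd m j)))) =
      List.map sigma4 (List.ofFn fun j : Fin n => catR i (α (Fin.natAdd m j))) := by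
    rw [List.map_ofFn]; rfl
  have ha : (Finset.univ.filter fun j : Fin m => catL i (α (Fin.castAdd n j)) = 1).card
      = count0 m n α i := by
    rw [count0_eq]; congr 1; ext j; simp [catL_eq_one]
  have hb : (Finset.univ.filter fun j : Fin m => catL i (α (Fin.castAdd n j)) = 2).card
      = count0 m n α (i+1) := by
    rw [count0_eq]; congr 1; ext j; simp [catL_eq_two]
  have hc : (Finset.univ.filter fun j : Fin n => catR i (α (Fin.natAdd m j)) = 1).card
      = count1 m n α (i+1) := by
    rw [count1_eq]; congr 1; ext j; simp [catR_eq_one]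
  have hd : (Finset.univ.filter fun j : Fin n => catR i (α (Fin.natAdd m j)) = 2).card
      = count1 m n α i := by
    rw [count1_eq]; congr 1; ext j; simp [catR_eq_two]
  rw [mapL, mapR, e1, e2, ← ha, ← hb, ← hc, ← hd]
  have s0 : sigma4 0 = Z := rfl
  have s1 : sigma4 1 = P := rfl
  have s2 : sigma4 2 = M := rfl
  have s3 : sigma4 3 = Z := rfl
  simp only [List.map_append, List.map_replicate, s0, s1, s2, s3, shape,
    List.replicate_add, List.append_assoc]

end SignAux
namespace SignAux

lemma phiNum_eq (m n : ℕ) (i : ℤ) (α : Fin (m + n) → ℤ) (hα : Antidominant m n α) :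
    phiNum m n i α = count0 m n α i + count1 m n α (i+1)
      - min (count0 m n α (i+1)) (count1 m n α (i+1)) := by
  obtain ⟨p, q, r, hs⟩ := sigList_eq_shape m n i α hα
  unfold phiNum redSig
  rw [hs]
  exact (counts_reduceSig p _ _ q _ _ r).1

lemma epsilonNum_eq (m n : ℕ) (i : ℤ) (α : Fin (m + n) → ℤ) (hα : Antidominant m n α) :
    epsilonNum m n i α = count0 m n α (i+1) + count1 m n α i
      - min (count0 m n α (i+1)) (count1 m n α (i+1)) := by
  obtain ⟨p, q, r, hs⟩ := sigList_eq_shape m n i α hα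
  unfold epsilonNum redSig
  rw [hs]
  exact (counts_reduceSig p _ _ q _ _ r).2

lemma card_lt_m (m n : ℕ) :
    (Finset.univ.filter fun j : Fin (m + n) => (j : ℕ) < m).card = m := by
  rw [Finset.card_filter, Fin.sum_univ_add]
  have h1 : ∀ j : Fin m, (if ((Fin.castAdd n j : Fin (m+n)) : ℕ) < m then (1:ℕ) else 0) = 1 := by
    intro j; rw [if_pos]; exact j.isLt
  have h2 : ∀ j : Fin n, (if ((Fin.natAdd m j : Fin (m+n)) : ℕ) < m then (1:ℕ) else 0) = 0 := by
    intro j; rw [if_neg]; simp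
  rw [Finset.sum_congr rfl (fun j _ => h1 j), Finset.sum_congr rfl (fun j _ => h2 j)]
  simp

lemma card_ge_m (m n : ℕ) :
    (Finset.univ.filter fun j : Fin (m + n) => m ≤ (j : ℕ)).card = n := by
  rw [Finset.card_filter, Fin.sum_univ_add]
  have h1 : ∀ j : Fin m, (if m ≤ ((Fin.castAdd n j : Fin (m+n)) : ℕ) then (1:ℕ) else 0) = 0 := by
    intro j; rw [if_neg]; rw [Fin.coe_castAdd]; exact not_le.mpr j.isLt
  have h2 : ∀ j : Fin n, (if m ≤ ((Fin.natAdd m j : Fin (m+n)) : ℕ) then (1:ℕ) else 0) = 1 := by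
    intro j; rw [if_pos]; simp
  rw [Finset.sum_congr rfl (fun j _ => h1 j), Finset.sum_congr rfl (fun j _ => h2 j)]
  simp

lemma sum_count0 (m n : ℕ) (α : Fin (m + n) → ℤ) (S : Finset ℤ)
    (hS : ∀ j, α j ∈ S) : ∑ x ∈ S, count0 m n α x = m := by
  have := Finset.card_eq_sum_card_fiberwise
    (s := Finset.univ.filter fun j : Fin (m+n) => (j : ℕ) < m) (t := S) (f := α)
    (fun x _ => hS x)
  rw [card_lt_m] at this
  have h2 : ∑ x ∈ S, count0 m n α x = ∑ b ∈ S,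
      (Finset.filter (fun a => α a = b)
        (Finset.filter (fun j : Fin (m+n) => (j:ℕ) < m) Finset.univ)).card :=
    Finset.sum_congr rfl (fun x _ => by
      unfold count0; congr 1; rw [Finset.filter_filter])
  rw [h2]; exact this.symm

lemma sum_count1 (m n : ℕ) (α : Fin (m + n) → ℤ) (S : Finset ℤ)
    (hS : ∀ j, α j ∈ S) : ∑ x ∈ S, count1 m n α x = n := by
  have := Finset.card_eq_sum_card_fiberwise
    (s := Finset.univ.filter fun j : Fin (m+n) => m ≤ (j : ℕ)) (t := S) (f := α)
    (fun x _ => hS x)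
  rw [card_ge_m] at this
  have h2 : ∑ x ∈ S, count1 m n α x = ∑ b ∈ S,
      (Finset.filter (fun a => α a = b)
        (Finset.filter (fun j : Fin (m+n) => m ≤ (j:ℕ)) Finset.univ)).card :=
    Finset.sum_congr rfl (fun x _ => by
      unfold count1; congr 1; rw [Finset.filter_filter])
  rw [h2]; exact this.symm

lemma count0_eq_zero (m n : ℕ) (α : Fin (m + n) → ℤ) (x : ℤ)
    (h : ∀ j, α j ≠ x) : count0 m n α x = 0 := by
  unfold count0
  rw [Finset.card_eq_zero, Finset.filter_eq_empty_iff]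
  exact fun j _ => fun hc => h j hc.2

end SignAux


/-- If `β, γ ∈ ℤ^{m|n}` are antidominant with the same
content-difference function, and `φ_x(γ) ≥ φ_x(β)` and `ε_x(γ) ≥ ε_x(β)`
for all `x ∈ ℤ`, then `γ = β`. -/
theorem antidominant_eq_of_epsilon_phi_le
    (m n : ℕ) (hm : 1 ≤ m) (hn : 1 ≤ n) (β γ : Fin (m + n) → ℤ)
    (hβ : Antidominant m n β) (hγ : Antidominant m n γ)
    (hd : ∀ y : ℤ, (count0 m n β y : ℤ) - (count1 m n β y : ℤ) =
      (count0 m n γ y : ℤ) - (count1 m n γ y : ℤ))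
    (hφ : ∀ x : ℤ, phiNum m n x β ≤ phiNum m n x γ)
    (hε : ∀ x : ℤ, epsilonNum m n x β ≤ epsilonNum m n x γ) :
    γ = β := by
  have key : ∀ x : ℤ, count0 m n β x ≤ count0 m n γ x := by
    intro x
    have h1 := hφ x
    rw [SignAux.phiNum_eq m n x β hβ, SignAux.phiNum_eq m n x γ hγ] at h1
    have h2 := hd (x+1)
    omega
  set S : Finset ℤ := Finset.image β Finset.univ ∪ Finset.image γ Finset.univ with hSdef
  have hβS : ∀ j, β j ∈ S := fun j =>
    Finset.mem_union_left _ (Finset.mem_image_of_mem β (Finset.mem_univ j))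
  have hγS : ∀ j, γ j ∈ S := fun j =>
    Finset.mem_union_right _ (Finset.mem_image_of_mem γ (Finset.mem_univ j))
  have hsum : ∑ x ∈ S, count0 m n β x = ∑ x ∈ S, count0 m n γ x := by
    rw [SignAux.sum_count0 m n β S hβS, SignAux.sum_count0 m n γ S hγS]
  have heqS : ∀ x ∈ S, count0 m n β x = count0 m n γ x :=
    (Finset.sum_eq_sum_iff_of_le (fun i _ => key i)).mp hsum
  have hc0 : ∀ x, count0 m n β x = count0 m n γ x := by
    intro x
    by_cases hx : x ∈ S
    · exact heqS x hx
    · rw [SignAux.count0_eq_zero m n β x (fun j hj => hx (hj ▸ hβS j)),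
        SignAux.count0_eq_zero m n γ x (fun j hj => hx (hj ▸ hγS j))]
  have hc1 : ∀ x, count1 m n β x = count1 m n γ x := by
    intro x
    have := hd x
    have := hc0 x
    omega
  -- left part
  have hLβ : Monotone (fun j : Fin m => β (Fin.castAdd n j)) := by
    intro j k hjk
    exact hβ.1 (Fin.castAdd n j) (Fin.castAdd n k) hjk k.isLt
  have hLγ : Monotone (fun j : Fin m => γ (Fin.castAdd n j)) := by
    intro j k hjk
    exact hγ.1 (Fin.castAdd n j) (Fin.castAdd n k) hjk k.isLt
  have eqL : (List.ofFn fun j : Fin m => γ (Fin.castAdd n j)) =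
      (List.ofFn fun j : Fin m => β (Fin.castAdd n j)) := by
    refine (fun hp h1 h2 => List.Perm.eq_of_pairwise' (r := (· ≤ ·)) h1 h2 hp) ?_ ?_ ?_
    · rw [List.perm_iff_count]
      intro y
      rw [SignAux.count_ofFn, SignAux.count_ofFn, ← SignAux.count0_eq, ← SignAux.count0_eq]
      exact (hc0 y).symm
    · exact List.pairwise_ofFn.mpr (fun _ _ h => hLγ h.le)
    · exact List.pairwise_ofFn.mpr (fun _ _ h => hLβ h.le)
  -- right part
  haveI : IsAntisymm ℤ (fun a b : ℤ => b ≤ a) := ⟨fun a b h1 h2 => le_antisymm h2 h1⟩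
  have eqR : (List.ofFn fun j : Fin n => γ (Fin.natAdd m j)) =
      (List.ofFn fun j : Fin n => β (Fin.natAdd m j)) := by
    apply fun hp h1 h2 => List.Perm.eq_of_pairwise' (r := fun a b : ℤ => b ≤ a) h1 h2 hp
    · rw [List.perm_iff_count]
      intro y
      rw [SignAux.count_ofFn, SignAux.count_ofFn, ← SignAux.count1_eq, ← SignAux.count1_eq]
      exact (hc1 y).symm
    · rw [List.pairwise_ofFn]
      intro j k hjk
      exact hγ.2 (Fin.natAdd m j) (Fin.natAdd m k) (by simp) (by simpa using hjk.le)
    · rw [List.pairwise_ofFn]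
      intro j k hjk
      exact hβ.2 (Fin.natAdd m j) (Fin.natAdd m k) (by simp) (by simpa using hjk.le)
  have hlists : List.ofFn γ = List.ofFn β := by
    rw [List.ofFn_add (f := γ), List.ofFn_add (f := β)]
    exact congrArg₂ (· ++ ·) eqL eqR
  exact List.ofFn_injective hlists
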